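/- Let I(φ⃗) be a fragmented ideal based on a sequence μ⃗ = (μ_n) of measures μ_n concentrated on a partition (P_n) of ω into finite sets, and suppose that for every X in the dual filter of I(μ⃗) one has limsup_n max{μ_n({k}) : k ∈ P_n ∩ X} > 0. Then I(μ⃗) contains no cotowers: every ⊆*-increasing sequence (A_α)_{α<κ} in I(μ⃗) with κ regular uncountable has a pseudounion. -/

import Mathlib

open Set Cardinal

section Aux
variable (P : ℕ → Set ℕ) (μ : ℕ → Set ℕ → ℝ)

/-- monotonicity of the measure on subsets of a block -/
lemma frag_mono (hpos : ∀ n A, 0 ≤ μ n A)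
    (hadd : ∀ n, ∀ A ⊆ P n, ∀ B ⊆ P n, Disjoint A B → μ n (A ∪ B) = μ n A + μ n B)
    (n : ℕ) {S T : Set ℕ} (hT : T ⊆ P n) (hST : S ⊆ T) : μ n S ≤ μ n T := by
  have h1 : S ⊆ P n := hST.trans hT
  have h2 : T \ S ⊆ P n := diff_subset.trans hT
  have h3 : Disjoint S (T \ S) := disjoint_sdiff_self_right
  have h4 := hadd n S h1 (T \ S) h2 h3
  rw [Set.union_diff_cancel hST] at h4
  have h5 := hpos n (T \ S)
  linarith

/-- counting lower bound: a finite set of atoms each of measure ≥ c has measure ≥ card * c -/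
lemma frag_count (hpos : ∀ n A, 0 ≤ μ n A)
    (hadd : ∀ n, ∀ A ⊆ P n, ∀ B ⊆ P n, Disjoint A B → μ n (A ∪ B) = μ n A + μ n B)
    (n : ℕ) (F : Finset ℕ) (c : ℝ) : ↑F ⊆ P n → (∀ k ∈ F, c ≤ μ n {k}) →
    (F.card : ℝ) * c ≤ μ n ↑F := by
  induction F using Finset.induction_on with
  | empty => intro _ _; simpa using hpos n (∅ : Set ℕ)
  | @insert a F ha ih =>
      intro hsub hc
      have hF : (F : Set ℕ) ⊆ P n := by
        intro x hx; exact hsub (by simpa using Or.inr hx)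
      have ha' : ({a} : Set ℕ) ⊆ P n := by
        intro x hx; rcases hx with rfl; exact hsub (by simp)
      have hdisj : Disjoint ({a} : Set ℕ) ↑F := by simpa using ha
      have heq : μ n (↑(insert a F)) = μ n {a} + μ n ↑F := by
        rw [Finset.coe_insert, ← Set.singleton_union]
        exact hadd n {a} ha' ↑F hF hdisj
      have h1 : c ≤ μ n {a} := hc a (by simp)
      have h2 : (F.card : ℝ) * c ≤ μ n ↑F := ih hF (fun k hk => hc k (by simp [hk]))
      rw [Finset.card_insert_of_notMem ha, heq]
      push_cast
      linarith

end Aux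

/-- The fragmented ideal generated by the sequence of measures `μ` on the blocks `P`. -/
def fragIdeal (P : ℕ → Set ℕ) (μ : ℕ → Set ℕ → ℝ) : Set (Set ℕ) :=
  {A | ∃ M : ℝ, ∀ n, μ n (A ∩ P n) ≤ M}

theorem stmt9 (P : ℕ → Set ℕ)
    (hPfin : ∀ n, (P n).Finite)
    (hPdisj : ∀ m n, m ≠ n → Disjoint (P m) (P n))
    (hPcov : (⋃ n, P n) = Set.univ)
    (μ : ℕ → Set ℕ → ℝ)
    (hpos : ∀ n A, 0 ≤ μ n A)
    (hadd : ∀ n, ∀ A ⊆ P n, ∀ B ⊆ P n, Disjoint A B → μ n (A ∪ B) = μ n A + μ n B)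
    (hsup : ∀ M : ℝ, ∃ n, M < μ n (P n))
    (hcond : ∀ X : Set ℕ, Xᶜ ∈ fragIdeal P μ →
      ∃ δ : ℝ, 0 < δ ∧ ∀ m : ℕ, ∃ n ≥ m, ∃ k ∈ P n ∩ X, δ ≤ μ n {k})
    (κ : Cardinal) (hreg : κ.IsRegular) (hunc : Cardinal.aleph0 < κ)
    (A : Ordinal → Set ℕ)
    (hmem : ∀ α < κ.ord, A α ∈ fragIdeal P μ)
    (hmono : ∀ β α, β ≤ α → α < κ.ord → (A β \ A α).Finite) :
    ∃ Y : Set ℕ, Yᶜ.Infinite ∧ ∀ α < κ.ord, (A α \ Y).Finite := by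
  classical
  -- block index function
  have hblock : ∀ x : ℕ, ∃ n, x ∈ P n := by
    intro x
    have : x ∈ ⋃ n, P n := by rw [hPcov]; trivial
    simpa using this
  choose bi hbi using hblock
  have hbiuniq : ∀ x n, x ∈ P n → bi x = n := by
    intro x n hx
    by_contra h
    exact Set.disjoint_left.mp (hPdisj _ _ h) (hbi x) hx
  -- finite sets meet finitely many blocks
  have hmeets : ∀ E : Set ℕ, E.Finite → {n | ∃ x ∈ E, x ∈ P n}.Finite := by
    intro E hE
    refine (hE.image bi).subset ?_
    rintro n ⟨x, hxE, hxP⟩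
    exact ⟨x, hxE, hbiuniq x n hxP⟩
  -- uniformization of the bound on an unbounded set
  obtain ⟨M, hM⟩ : ∃ m : ℕ, ∀ γ < κ.ord,
      ∃ α, (α < κ.ord ∧ ∀ n, μ n (A α ∩ P n) ≤ (m : ℝ)) ∧ γ ≤ α := by
    by_contra hno
    push_neg at hno
    choose γf hγ1 hγ2 using hno
    have hsupγ : iSup γf < κ.ord :=
      Cardinal.iSup_lt_ord_lift_of_isRegular (f := γf) hreg (by simpa using hunc) hγ1
    obtain ⟨Mr, hMr⟩ := hmem _ hsupγ
    set m₀ : ℕ := ⌈Mr⌉₊ with hm₀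
    have hgood : iSup γf < κ.ord ∧ ∀ n, μ n (A (iSup γf) ∩ P n) ≤ (m₀ : ℝ) :=
      ⟨hsupγ, fun n => (hMr n).trans (Nat.le_ceil Mr)⟩
    have hlt := hγ2 m₀ (iSup γf) hgood
    exact absurd (Ordinal.le_iSup γf m₀) (not_le.mpr hlt)
  set Good : Ordinal → Prop := fun α => α < κ.ord ∧ ∀ n, μ n (A α ∩ P n) ≤ (M : ℝ) with hGood
  -- layers
  set Lay : ℕ → ℕ → Set ℕ := fun j n => {k | k ∈ P n ∧ 1 / ((j : ℝ) + 1) ≤ μ n {k}}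
    with hLay
  have hLayP : ∀ j n, Lay j n ⊆ P n := fun j n k hk => hk.1
  have hLayFin : ∀ j n, (Lay j n).Finite := fun j n => (hPfin n).subset (hLayP j n)
  set NN : ℕ → Set ℕ := fun j => {n | ∀ α, Good α → ¬ Lay j n ⊆ A α} with hNN
  by_cases hcase : ∃ j, (NN j).Infinite
  · -- CASE 1 : a fixed layer with never-swallowed blocks
    obtain ⟨j, hNinf⟩ := hcase
    -- count bound
    have hcnt : ∀ β n, Good β → (A β ∩ Lay j n).ncard ≤ M * (j + 1) := by
      intro β n hβ
      have hfin : (A β ∩ Lay j n).Finite := (hLayFin j n).subset inter_subset_right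
      have hsub : (A β ∩ Lay j n) ⊆ P n := inter_subset_right.trans (hLayP j n)
      have h1 : ((hfin.toFinset.card : ℝ)) * (1 / ((j : ℝ) + 1)) ≤ μ n (A β ∩ Lay j n) := by
        have := frag_count P μ hpos hadd n hfin.toFinset (1 / ((j : ℝ) + 1))
          (by rw [Set.Finite.coe_toFinset]; exact hsub)
          (fun k hk => by
            have hk' : k ∈ A β ∩ Lay j n := (Set.Finite.mem_toFinset hfin).mp hk
            exact hk'.2.2)
        rwa [Set.Finite.coe_toFinset] at this
      have h2 : μ n (A β ∩ Lay j n) ≤ μ n (A β ∩ P n) :=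
        frag_mono P μ hpos hadd n inter_subset_right
          (inter_subset_inter_right _ (hLayP j n))
      have h3 : μ n (A β ∩ P n) ≤ (M : ℝ) := hβ.2 n
      have hj1 : (0 : ℝ) < (j : ℝ) + 1 := by positivity
      have h4 : (hfin.toFinset.card : ℝ) ≤ (M : ℝ) * ((j : ℝ) + 1) := by
        have h15 := (h1.trans h2).trans h3
        rw [div_eq_mul_inv, one_mul] at h15
        have := mul_le_mul_of_nonneg_right h15 (le_of_lt hj1)
        calc (hfin.toFinset.card : ℝ)
            = (hfin.toFinset.card : ℝ) * (((j:ℝ)+1)⁻¹ * ((j:ℝ)+1)) := by field_simp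
          _ = (hfin.toFinset.card : ℝ) * ((j:ℝ)+1)⁻¹ * ((j:ℝ)+1) := by ring
          _ ≤ (M : ℝ) * ((j : ℝ) + 1) := this
      have h5 : hfin.toFinset.card ≤ M * (j + 1) := by
        have h6 : ((M * (j + 1) : ℕ) : ℝ) = (M : ℝ) * ((j : ℝ) + 1) := by push_cast; ring
        exact_mod_cast h4.trans_eq h6.symm
      rwa [Set.ncard_eq_toFinset_card _ hfin]
    -- the τ functional
    set cnt : Ordinal → ℕ → ℕ := fun β n => (A β ∩ Lay j n).ncard with hcntdef
    set CS : Ordinal → Set ℕ := fun β => {c | {n | n ∈ NN j ∧ c ≤ cnt β n}.Infinite} with hCS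
    have hCS0 : ∀ β, 0 ∈ CS β := by
      intro β
      have : NN j ⊆ {n | n ∈ NN j ∧ 0 ≤ cnt β n} := fun n hn => ⟨hn, Nat.zero_le _⟩
      exact hNinf.mono this
    have hCSbdd : ∀ β, Good β → ∀ c ∈ CS β, c ≤ M * (j + 1) := by
      intro β hβ c hc
      obtain ⟨n, hn⟩ := hc.nonempty
      exact hn.2.trans (hcnt β n hβ)
    have hbdd : ∀ β, Good β → BddAbove (CS β) := by
      intro β hβ
      exact ⟨M * (j + 1), fun c hc => hCSbdd β hβ c hc⟩
    set τ : Ordinal → ℕ := fun β => sSup (CS β) with hτ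
    have hτmem : ∀ β, Good β → τ β ∈ CS β := fun β hβ =>
      Nat.sSup_mem ⟨0, hCS0 β⟩ (hbdd β hβ)
    have hτle : ∀ β, Good β → ∀ c ∈ CS β, c ≤ τ β := fun β hβ c hc =>
      le_csSup (hbdd β hβ) hc
    -- argmax
    obtain ⟨α₀, hα₀good, hα₀max⟩ : ∃ α₀, Good α₀ ∧ ∀ β, Good β → τ β ≤ τ α₀ := by
      have h0ord : (0 : Ordinal) < κ.ord := by
        have h1 := Cardinal.ord_le_ord.mpr hreg.1
        have h2 : (0 : Ordinal) < Cardinal.aleph0.ord := by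
          rw [Cardinal.ord_aleph0]; exact Ordinal.omega0_pos
        exact h2.trans_le h1
      obtain ⟨α₁, hα₁, _⟩ := hM 0 h0ord
      set TS : Set ℕ := {c | ∃ α, Good α ∧ τ α = c} with hTS
      have hTSne : TS.Nonempty := ⟨τ α₁, α₁, hα₁, rfl⟩
      have hTSbdd : BddAbove TS := by
        refine ⟨M * (j + 1), ?_⟩
        rintro c ⟨α, hα, rfl⟩
        exact hCSbdd α hα _ (hτmem α hα)
      obtain ⟨α₀, hα₀, hval⟩ := Nat.sSup_mem hTSne hTSbdd
      exact ⟨α₀, hα₀, fun β hβ => by rw [hval]; exact le_csSup hTSbdd ⟨β, hβ, rfl⟩⟩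
    -- witness blocks
    set W : Set ℕ := {n | n ∈ NN j ∧ τ α₀ ≤ cnt α₀ n} with hW
    have hWinf : W.Infinite := hτmem α₀ hα₀good
    -- escape points
    have hz0 : ∀ n, ∃ k, n ∈ W → k ∈ Lay j n ∧ k ∉ A α₀ := by
      intro n
      by_cases hn : n ∈ W
      · have h1 : ¬ Lay j n ⊆ A α₀ := hn.1 α₀ hα₀good
        rw [Set.not_subset] at h1
        obtain ⟨k, hk1, hk2⟩ := h1
        exact ⟨k, fun _ => ⟨hk1, hk2⟩⟩
      · exact ⟨0, fun h => absurd h hn⟩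
    choose z hzp using hz0
    set Z : Set ℕ := z '' W with hZ
    have hinj : Set.InjOn z W := by
      intro n hn m hm hzz
      have h1 : z n ∈ P n := ((hzp n hn).1).1
      have h2 : z m ∈ P m := ((hzp m hm).1).1
      rw [← hbiuniq (z n) n h1, hzz, hbiuniq (z m) m h2]
    have hZinf : Z.Infinite := hWinf.image hinj
    -- key claim
    have hkey : ∀ β, Good β → α₀ ≤ β → (Z ∩ A β).Finite := by
      intro β hβ hle
      rw [← Set.not_infinite]
      intro hinf'
      set C : Set ℕ := {n | n ∈ W ∧ z n ∈ A β} with hC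
      have hCinf : C.Infinite := by
        by_contra hCfin
        rw [Set.not_infinite] at hCfin
        have hsubset : Z ∩ A β ⊆ z '' C := by
          rintro x ⟨⟨n, hnW, rfl⟩, hxA⟩
          exact ⟨n, ⟨hnW, hxA⟩, rfl⟩
        exact Set.not_infinite.mpr ((hCfin.image z).subset hsubset) hinf'
      set B : Set ℕ := {n | ∃ x ∈ A α₀ \ A β, x ∈ P n} with hB
      have hBfin : B.Finite := hmeets _ (hmono α₀ β hle hβ.1)
      have hCBinf : (C \ B).Infinite := hCinf.diff hBfin
      have hjump : (τ α₀ + 1) ∈ CS β := by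
        refine hCBinf.mono ?_
        rintro n ⟨⟨⟨hnN, hτn⟩, hzA⟩, hnB⟩
        refine ⟨hnN, ?_⟩
        have hWn : n ∈ W := ⟨hnN, hτn⟩
        have hz1 : z n ∈ Lay j n := (hzp n hWn).1
        have hz2 : z n ∉ A α₀ := (hzp n hWn).2
        have hsub1 : A α₀ ∩ Lay j n ⊆ A β ∩ Lay j n := by
          rintro x ⟨hx1, hx2⟩
          refine ⟨?_, hx2⟩
          by_contra hxβ
          exact hnB ⟨x, ⟨hx1, hxβ⟩, hx2.1⟩
        have hfinβ : (A β ∩ Lay j n).Finite := (hLayFin j n).subset inter_subset_right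
        have hfinα : (A α₀ ∩ Lay j n).Finite := (hLayFin j n).subset inter_subset_right
        have hins : insert (z n) (A α₀ ∩ Lay j n) ⊆ A β ∩ Lay j n := by
          rintro x hx
          rcases Set.mem_insert_iff.mp hx with rfl | hx'
          · exact ⟨hzA, hz1⟩
          · exact hsub1 hx'
        have hcard1 : (insert (z n) (A α₀ ∩ Lay j n)).ncard = (A α₀ ∩ Lay j n).ncard + 1 :=
          Set.ncard_insert_of_notMem (fun h => hz2 h.1) hfinα
        have hcard2 : (insert (z n) (A α₀ ∩ Lay j n)).ncard ≤ (A β ∩ Lay j n).ncard :=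
          Set.ncard_le_ncard hins hfinβ
        have hfin2 : (A α₀ ∩ Lay j n).ncard + 1 ≤ cnt β n := by
          rw [← hcard1]; exact hcard2
        have hdef : cnt α₀ n = (A α₀ ∩ Lay j n).ncard := rfl
        rw [hdef] at hτn
        omega
      have h1 : τ α₀ + 1 ≤ τ β := hτle β hβ _ hjump
      have h2 : τ β ≤ τ α₀ := hα₀max β hβ
      omega
    -- conclusion of case 1
    refine ⟨Zᶜ, by rwa [compl_compl], ?_⟩
    intro α hα
    have hmax : max α α₀ < κ.ord := max_lt hα hα₀good.1
    obtain ⟨β, hβ, hβge⟩ := hM (max α α₀) hmax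
    have h1 : (A α \ A β).Finite := hmono α β ((le_max_left _ _).trans hβge) hβ.1
    have h2 : (Z ∩ A β).Finite := hkey β hβ ((le_max_right _ _).trans hβge)
    refine (h1.union h2).subset ?_
    rintro x ⟨hxA, hxZ⟩
    by_cases hxβ : x ∈ A β
    · exact Or.inr ⟨not_not.mp hxZ, hxβ⟩
    · exact Or.inl ⟨hxA, hxβ⟩
  · -- CASE 2 : every layer is eventually swallowed; contradiction with hcond
    exfalso
    push_neg at hcase
    have hNfin : ∀ j, (NN j).Finite := fun j => hcase j
    have hbex : ∀ j, ∃ b, ∀ n ∈ NN j, n < b := by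
      intro j
      obtain ⟨b, hb⟩ := (hNfin j).bddAbove
      exact ⟨b + 1, fun n hn => Nat.lt_succ_of_le (hb hn)⟩
    choose b hbspec using hbex
    set D : Set ℕ := {k | ∃ n jj, k ∈ Lay jj n ∧ ∀ i ≤ jj, b i ≤ n} with hD
    have hDmem : Dᶜᶜ ∈ fragIdeal P μ := by
      rw [compl_compl]
      refine ⟨(M : ℝ), fun n => ?_⟩
      by_cases hne : (D ∩ P n).Nonempty
      · -- find a single layer containing D ∩ P n
        have hfinDP : (D ∩ P n).Finite := (hPfin n).subset inter_subset_right
        -- each element has a witness layer at block n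
        have hwit : ∀ k ∈ D ∩ P n, ∃ jj, k ∈ Lay jj n ∧ ∀ i ≤ jj, b i ≤ n := by
          rintro k ⟨⟨n', jj, hk1, hk2⟩, hkP⟩
          have hn' : n' = n := by
            have := hbiuniq k n' (hLayP jj n' hk1)
            have h2 := hbiuniq k n hkP
            rw [← this, h2]
          subst hn'
          exact ⟨jj, hk1, hk2⟩
        -- choose witnesses
        have hwit' : ∀ k, ∃ jj, k ∈ D ∩ P n → (k ∈ Lay jj n ∧ ∀ i ≤ jj, b i ≤ n) := by
          intro k
          by_cases hk : k ∈ D ∩ P n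
          · obtain ⟨jj, h⟩ := hwit k hk; exact ⟨jj, fun _ => h⟩
          · exact ⟨0, fun h => absurd h hk⟩
        choose Jf hJf using hwit'
        set Fs : Finset ℕ := hfinDP.toFinset with hFs
        have hFsne : Fs.Nonempty := by
          rwa [hFs, Set.Finite.toFinset_nonempty]
        obtain ⟨k₀, hk₀, hk₀sup⟩ := Finset.exists_mem_eq_sup Fs hFsne Jf
        set jstar : ℕ := Fs.sup Jf with hjstar
        have hk₀mem : k₀ ∈ D ∩ P n := (Set.Finite.mem_toFinset hfinDP).mp hk₀
        have hadm : ∀ i ≤ jstar, b i ≤ n := by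
          rw [hk₀sup]; exact (hJf k₀ hk₀mem).2
        have hsubLay : D ∩ P n ⊆ Lay jstar n := by
          intro k hk
          have hkF : k ∈ Fs := (Set.Finite.mem_toFinset hfinDP).mpr hk
          have hJ := hJf k hk
          have hle : Jf k ≤ jstar := Finset.le_sup hkF
          have h1 : k ∈ Lay (Jf k) n := hJ.1
          refine ⟨h1.1, le_trans ?_ h1.2⟩
          apply one_div_le_one_div_of_le
          · positivity
          · have : (Jf k : ℝ) ≤ (jstar : ℝ) := by exact_mod_cast hle
            linarith
        have hnN : n ∉ NN jstar := by
          intro hnNmem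
          have hx1 := hbspec jstar n hnNmem
          have hx2 := hadm jstar le_rfl
          omega
        have hα : ∃ α, Good α ∧ Lay jstar n ⊆ A α := by
          by_contra hcon
          push_neg at hcon
          exact hnN hcon
        obtain ⟨α, hαg, hαsub⟩ := hα
        have hm1 : μ n (D ∩ P n) ≤ μ n (Lay jstar n) :=
          frag_mono P μ hpos hadd n (hLayP _ _) hsubLay
        have hm2 : μ n (Lay jstar n) ≤ μ n (A α ∩ P n) :=
          frag_mono P μ hpos hadd n inter_subset_right
            (fun k hk => ⟨hαsub hk, hk.1⟩)
        exact (hm1.trans hm2).trans (hαg.2 n)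
      · rw [Set.not_nonempty_iff_eq_empty] at hne
        rw [hne]
        have h0 : μ n ∅ = 0 := by
          have := hadd n ∅ (empty_subset _) ∅ (empty_subset _) (by simp)
          simpa using this.symm
        rw [h0]
        positivity
    obtain ⟨δ, hδpos, hδ⟩ := hcond Dᶜ hDmem
    obtain ⟨j₁, hj₁⟩ := exists_nat_one_div_lt hδpos
    set m : ℕ := (Finset.range (j₁ + 1)).sup b with hm
    obtain ⟨n, hnm, k, hkmem, hkδ⟩ := hδ m
    apply hkmem.2
    refine ⟨n, j₁, ⟨hkmem.1, le_of_lt (lt_of_lt_of_le hj₁ hkδ)⟩, ?_⟩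
    intro i hi
    have : b i ≤ m := Finset.le_sup (Finset.mem_range.mpr (by omega))
    omega
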